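/- Let k be a field and φ ∈ k((X^{-1})) with |φ|_∞ < 1 all of whose continued fraction partial quotients have degree 1, with Fibonacci polynomials F_n(X) (denominators of convergents), so deg F_n = n. If n(X) ∈ k[X] is nonzero with Zeckendorf representation n(X) = Σ_{i=0}^r z_i F_i(X) and j is minimal with z_j ≠ 0, then ν_∞({n(X)·φ}) = −j − 1, where {·} denotes the fractional part and ν_∞ the degree valuation. -/

import Mathlib

open Polynomial Finset

/-- The element `X` of `k((X⁻¹))`, realized in `LaurentSeries k` (whose variable is `t = X⁻¹`)
as the inverse of `t`, i.e. `single (-1) 1`. -/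
noncomputable def bigX (k : Type*) [Field k] : LaurentSeries k :=
  (HahnSeries.single (1 : ℤ) (1 : k))⁻¹

/-- Embedding of `k[X]` into `k((X⁻¹)) = LaurentSeries k` by evaluating at `X = t⁻¹`. -/
noncomputable def embedPoly {k : Type*} [Field k] (P : Polynomial k) : LaurentSeries k :=
  Polynomial.aeval (bigX k) P

lemma algebraMap_eq_C {k : Type*} [Field k] (a : k) :
    (algebraMap k (LaurentSeries k)) a = HahnSeries.C a := by
  rw [HahnSeries.algebraMap_apply', PowerSeries.algebraMap_apply,
    Algebra.algebraMap_self, RingHom.id_apply, HahnSeries.ofPowerSeries_C]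

lemma key_coeff {k : Type*} [Field k] (φ : LaurentSeries k) (F : ℕ → Polynomial k)
    (r : ℕ) (z : ℕ → k) (m : ℤ) :
    ((embedPoly (∑ i ∈ Finset.range (r + 1), C (z i) * F i)) * φ).coeff m
      = ∑ i ∈ Finset.range (r + 1), z i * ((embedPoly (F i)) * φ).coeff m := by
  have : embedPoly (∑ i ∈ Finset.range (r + 1), C (z i) * F i)
      = ∑ i ∈ Finset.range (r + 1), HahnSeries.C (z i) * embedPoly (F i) := by
    unfold embedPoly
    rw [map_sum]
    refine Finset.sum_congr rfl fun i _ => ?_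
    rw [map_mul, Polynomial.aeval_C, algebraMap_eq_C]
  have hc : ∀ f : ℕ → LaurentSeries k, (∑ i ∈ Finset.range (r + 1), f i).coeff m
      = ∑ i ∈ Finset.range (r + 1), (f i).coeff m := fun f =>
    map_sum (HahnSeries.coeff.addMonoidHom m) f (Finset.range (r + 1))
  rw [this, Finset.sum_mul, hc]
  refine Finset.sum_congr rfl fun i _ => ?_
  rw [mul_assoc]
  exact HahnSeries.coeff_single_zero_mul

theorem valuation_of_fracPart_via_zeckendorf (k : Type*) [Field k]
    (φ : LaurentSeries k)
    -- `|φ|_∞ < 1`: only negative powers of `X` occur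
    (hφ : ∀ m : ℤ, m ≤ 0 → φ.coeff m = 0)
    (F : ℕ → Polynomial k)
    -- `F n` has degree `n`
    (hdeg : ∀ n : ℕ, (F n).natDegree = n)
    -- `F n` is the denominator of the `n`-th convergent and all partial quotients have
    -- degree 1: `ν_∞({F_n φ}) = −(n+1)`, i.e. the coefficients of `F_n·φ` at `t^m`
    -- vanish for `1 ≤ m ≤ n` and the coefficient at `t^(n+1)` is nonzero
    (hconv : ∀ n : ℕ,
      (∀ m : ℤ, 1 ≤ m → m ≤ (n : ℤ) → ((embedPoly (F n)) * φ).coeff m = 0) ∧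
      ((embedPoly (F n)) * φ).coeff ((n : ℤ) + 1) ≠ 0)
    (r : ℕ) (z : ℕ → k) (nX : Polynomial k)
    -- Zeckendorf representation `n(X) = Σ_{i=0}^r z_i F_i(X)`
    (hnX : nX = ∑ i ∈ Finset.range (r + 1), C (z i) * F i)
    (j : ℕ) (hjr : j ≤ r) (hj : z j ≠ 0) (hjmin : ∀ i : ℕ, i < j → z i = 0) :
    -- conclusion: `ν_∞({n(X)·φ}) = −j−1`
    (∀ m : ℤ, 1 ≤ m → m ≤ (j : ℤ) → ((embedPoly nX) * φ).coeff m = 0) ∧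
    ((embedPoly nX) * φ).coeff ((j : ℤ) + 1) ≠ 0 := by
  subst hnX
  constructor
  · intro m hm1 hmj
    rw [key_coeff]
    refine Finset.sum_eq_zero fun i hi => ?_
    rcases lt_or_ge i j with h | h
    · rw [hjmin i h, zero_mul]
    · rw [(hconv i).1 m hm1 (hmj.trans (by exact_mod_cast h)), mul_zero]
  · rw [key_coeff]
    rw [Finset.sum_eq_single j]
    · exact mul_ne_zero hj (hconv j).2
    · intro i hi hij
      rcases lt_or_ge i j with h | h
      · rw [hjmin i h, zero_mul]
      · have h' : j < i := lt_of_le_of_ne h (Ne.symm hij)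
        rw [(hconv i).1 _ (by linarith) (by exact_mod_cast h'), mul_zero]
    · intro h
      exact absurd (Finset.mem_range.mpr (by omega)) h
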